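/- Let d be a natural number with 1 ≤ d ≤ 4, let A be a symmetric d×d real matrix, and let e ∈ ℝ^d be a unit vector. Then (tr A)·⟨Ae, e⟩ − ‖Ae‖² + ‖A‖_F² ≥ C_d·(tr A)², where C_d := min(1/5, 1 − 5(d−1)/16)/d > 0. -/
import Mathlib

open Finset

lemma stmt0_final (d : ℕ) (hd1 : 1 ≤ d) (hd4 : d ≤ 4) (H a b F : ℝ)
    (h1 : a ^ 2 ≤ b) (h2 : (H - a) ^ 2 ≤ ((d : ℝ) - 1) * (F - 2 * b + a ^ 2))
    (h3 : 0 ≤ F - 2 * b + a ^ 2) :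
    min (1/5 : ℝ) (1 - 5 * ((d : ℝ) - 1) / 16) / d * H ^ 2 ≤ H * a - b + F := by
  interval_cases d <;> norm_num [min_def] at h2 ⊢ <;>
    nlinarith [sq_nonneg (2*a - H), sq_nonneg (2*a + H), sq_nonneg a, sq_nonneg (H - a)]

lemma stmt0_core (d : ℕ) (A : Matrix (Fin d) (Fin d) ℝ) (hsym : ∀ i j, A i j = A j i)
    (e : Fin d → ℝ) (he : ∑ i, e i ^ 2 = 1) :
    (∑ i, A i i - ∑ i, (∑ j, A i j * e j) * e i) ^ 2
      ≤ ((d : ℝ) - 1) * ((∑ i, ∑ j, A i j ^ 2) - 2 * (∑ i, (∑ j, A i j * e j) ^ 2)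
          + (∑ i, (∑ j, A i j * e j) * e i) ^ 2)
    ∧ 0 ≤ (∑ i, ∑ j, A i j ^ 2) - 2 * (∑ i, (∑ j, A i j * e j) ^ 2)
          + (∑ i, (∑ j, A i j * e j) * e i) ^ 2 := by
  set u : Fin d → ℝ := fun i => ∑ j, A i j * e j with hu
  set H : ℝ := ∑ i, A i i with hH
  set a : ℝ := ∑ i, u i * e i with ha
  set b : ℝ := ∑ i, u i ^ 2 with hb
  set F : ℝ := ∑ i, ∑ j, A i j ^ 2 with hF
  -- column sums via symmetry
  have hcol : ∀ j, ∑ i, e i * A i j = u j := by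
    intro j
    rw [hu]
    exact Finset.sum_congr rfl fun i _ => by rw [hsym i j]; ring
  set v : Fin d → ℝ := fun i => u i - a * e i with hv
  set M : Matrix (Fin d) (Fin d) ℝ := fun i j => A i j - e i * u j - e j * v i with hM
  -- ∑ v² = b - a²
  have hv2 : ∑ i, v i ^ 2 = b - a ^ 2 := by
    have : ∀ i, v i ^ 2 = u i ^ 2 - 2 * a * (u i * e i) + a ^ 2 * e i ^ 2 := by
      intro i; rw [hv]; ring
    rw [Finset.sum_congr rfl fun i _ => this i, Finset.sum_add_distrib,
      Finset.sum_sub_distrib, ← Finset.mul_sum, ← Finset.mul_sum, ← ha, ← hb, he]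
    ring
  -- row sums of B := A i j - e i * u j against e
  have hBe : ∀ i, ∑ j, (A i j - e i * u j) * e j = v i := by
    intro i
    have : ∀ j, (A i j - e i * u j) * e j = A i j * e j - e i * (u j * e j) := by
      intro j; ring
    rw [Finset.sum_congr rfl fun j _ => this j, Finset.sum_sub_distrib, ← Finset.mul_sum,
      ← ha]
    show u i - e i * a = v i
    simp only [hv]; ring
  -- per-row expansion of ∑ j, M i j ^ 2
  have hrow : ∀ i, ∑ j, M i j ^ 2 = (∑ j, (A i j - e i * u j) ^ 2) - v i ^ 2 := by
    intro i
    have expand : ∀ j, M i j ^ 2 =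
        (A i j - e i * u j) ^ 2 - 2 * v i * ((A i j - e i * u j) * e j)
          + v i ^ 2 * e j ^ 2 := by
      intro j; rw [hM]; ring
    rw [Finset.sum_congr rfl fun j _ => expand j, Finset.sum_add_distrib,
      Finset.sum_sub_distrib, ← Finset.mul_sum, ← Finset.mul_sum, hBe, he]
    ring
  -- ∑∑ B² = F - b
  have hB2 : ∑ i, ∑ j, (A i j - e i * u j) ^ 2 = F - b := by
    have expand : ∀ i j, (A i j - e i * u j) ^ 2 =
        A i j ^ 2 - 2 * (u j * (e i * A i j)) + e i ^ 2 * u j ^ 2 := by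
      intro i j; ring
    have step1 : ∑ i, ∑ j, (u j * (e i * A i j)) = b := by
      rw [Finset.sum_comm]
      have : ∀ j, ∑ i, u j * (e i * A i j) = u j ^ 2 := by
        intro j; rw [← Finset.mul_sum, hcol]; ring
      rw [Finset.sum_congr rfl fun j _ => this j, ← hb]
    have step2 : ∑ i, ∑ j, e i ^ 2 * u j ^ 2 = b := by
      have : ∀ i, ∑ j, e i ^ 2 * u j ^ 2 = e i ^ 2 * b := by
        intro i; rw [← Finset.mul_sum, ← hb]
      rw [Finset.sum_congr rfl fun i _ => this i, ← Finset.sum_mul, he]; ring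
    calc ∑ i, ∑ j, (A i j - e i * u j) ^ 2
        = ∑ i, ∑ j, (A i j ^ 2 - 2 * (u j * (e i * A i j)) + e i ^ 2 * u j ^ 2) := by
          exact Finset.sum_congr rfl fun i _ => Finset.sum_congr rfl fun j _ => expand i j
      _ = ∑ i, ((∑ j, A i j ^ 2) - 2 * ∑ j, (u j * (e i * A i j)) + ∑ j, e i ^ 2 * u j ^ 2) := by
          exact Finset.sum_congr rfl fun i _ => by
            rw [Finset.sum_add_distrib, Finset.sum_sub_distrib, ← Finset.mul_sum]
      _ = F - 2 * b + b := by
          rw [Finset.sum_add_distrib, Finset.sum_sub_distrib, ← hF, ← Finset.mul_sum,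
            step1, step2]
      _ = F - b := by ring
  -- ∑∑ M² = F - 2b + a²
  have hM2 : ∑ i, ∑ j, M i j ^ 2 = F - 2 * b + a ^ 2 := by
    rw [Finset.sum_congr rfl fun i _ => hrow i, Finset.sum_sub_distrib, hB2, hv2]
    ring
  -- ∑ j, M i j * e j = 0
  have hMe : ∀ i, ∑ j, M i j * e j = 0 := by
    intro i
    have : ∀ j, M i j * e j = (A i j - e i * u j) * e j - v i * e j ^ 2 := by
      intro j; rw [hM]; ring
    rw [Finset.sum_congr rfl fun j _ => this j, Finset.sum_sub_distrib, hBe,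
      ← Finset.mul_sum, he]
    ring
  -- trace of M
  have hMtr : ∑ i, M i i = H - a := by
    have : ∀ i, M i i = A i i - e i * u i - (u i * e i - a * (e i * e i)) := by
      intro i; rw [hM, hv]; ring
    rw [Finset.sum_congr rfl fun i _ => this i, Finset.sum_sub_distrib,
      Finset.sum_sub_distrib, ← hH]
    have h1 : ∑ i, e i * u i = a := by
      rw [ha]; exact Finset.sum_congr rfl fun i _ => mul_comm _ _
    have h2 : ∑ i, (u i * e i - a * (e i * e i)) = a - a := by
      have hee : ∑ i, e i * e i = 1 := by
        rw [← he]; exact Finset.sum_congr rfl fun i _ => (pow_two (e i)).symm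
      rw [Finset.sum_sub_distrib, ← ha, ← Finset.mul_sum, hee, mul_one]
    rw [h1, h2]; ring
  -- P
  set P : Matrix (Fin d) (Fin d) ℝ := fun i j => (if i = j then 1 else 0) - e i * e j with hP
  have hP2 : ∑ i, ∑ j, P i j ^ 2 = (d : ℝ) - 1 := by
    have expand : ∀ i j, P i j ^ 2 =
        ((if i = j then (1:ℝ) else 0) - 2 * ((if i = j then (1:ℝ) else 0) * (e i * e j))
          + e i ^ 2 * e j ^ 2) := by
      intro i j
      rw [hP]
      by_cases h : i = j <;> simp [h] <;> ring
    rw [Finset.sum_congr rfl fun i _ => Finset.sum_congr rfl fun j _ => expand i j]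
    have s1 : ∑ i : Fin d, ∑ j, (if i = j then (1:ℝ) else 0) = d := by simp
    have s2 : ∑ i : Fin d, ∑ j, ((if i = j then (1:ℝ) else 0) * (e i * e j)) = 1 := by
      have : ∀ i : Fin d, ∑ j, ((if i = j then (1:ℝ) else 0) * (e i * e j))
          = e i ^ 2 := by
        intro i
        rw [Finset.sum_eq_single i (fun j _ hj => by simp [Ne.symm hj])
          (fun h => absurd (Finset.mem_univ i) h)]
        simp [sq]
      rw [Finset.sum_congr rfl fun i _ => this i, he]
    have s3 : ∑ i : Fin d, ∑ j, e i ^ 2 * e j ^ 2 = 1 := by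
      have : ∀ i : Fin d, ∑ j, e i ^ 2 * e j ^ 2 = e i ^ 2 := by
        intro i; rw [← Finset.mul_sum, he, mul_one]
      rw [Finset.sum_congr rfl fun i _ => this i, he]
    have : ∀ i : Fin d, (∑ j, ((if i = j then (1:ℝ) else 0)
        - 2 * ((if i = j then (1:ℝ) else 0) * (e i * e j)) + e i ^ 2 * e j ^ 2))
        = (∑ j, (if i = j then (1:ℝ) else 0))
          - 2 * (∑ j, ((if i = j then (1:ℝ) else 0) * (e i * e j)))
          + ∑ j, e i ^ 2 * e j ^ 2 := by
      intro i
      rw [Finset.sum_add_distrib, Finset.sum_sub_distrib, ← Finset.mul_sum]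
    rw [Finset.sum_congr rfl fun i _ => this i, Finset.sum_add_distrib,
      Finset.sum_sub_distrib, s1, ← Finset.mul_sum, s2, s3]
    ring
  -- ∑∑ P M = H - a
  have hPM : ∑ i, ∑ j, P i j * M i j = H - a := by
    have : ∀ i, ∑ j, P i j * M i j = M i i - e i * ∑ j, M i j * e j := by
      intro i
      have expand : ∀ j, P i j * M i j =
          (if i = j then (1:ℝ) else 0) * M i j - e i * (M i j * e j) := by
        intro j; rw [hP]; ring
      rw [Finset.sum_congr rfl fun j _ => expand j, Finset.sum_sub_distrib, ← Finset.mul_sum]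
      congr 1
      rw [Finset.sum_eq_single i (fun j _ hj => by simp [Ne.symm hj])
        (fun h => absurd (Finset.mem_univ i) h)]
      simp
    rw [Finset.sum_congr rfl fun i _ => this i]
    have : ∀ i, M i i - e i * ∑ j, M i j * e j = M i i := by
      intro i; rw [hMe i]; ring
    rw [Finset.sum_congr rfl fun i _ => this i, hMtr]
  -- Cauchy-Schwarz over pairs
  have cs := Finset.sum_mul_sq_le_sq_mul_sq Finset.univ
    (fun p : Fin d × Fin d => P p.1 p.2) (fun p : Fin d × Fin d => M p.1 p.2)
  rw [Fintype.sum_prod_type, Fintype.sum_prod_type, Fintype.sum_prod_type] at cs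
  simp only [hPM, hP2, hM2] at cs
  constructor
  · exact cs
  · rw [← hM2]
    exact Finset.sum_nonneg fun i _ => Finset.sum_nonneg fun j _ => sq_nonneg _

/-- For `1 ≤ d ≤ 4`, a symmetric `d × d` real matrix `A`, and a unit vector
`e ∈ ℝ^d`, one has `(tr A)⟨Ae, e⟩ − ‖Ae‖² + ‖A‖_F² ≥ C_d (tr A)²` where
`C_d = min(1/5, 1 − 5(d−1)/16)/d > 0`. -/
theorem stmt_0 (d : ℕ) (hd1 : 1 ≤ d) (hd4 : d ≤ 4)
    (A : Matrix (Fin d) (Fin d) ℝ) (hA : A.IsSymm)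
    (e : Fin d → ℝ) (he : ∑ i, e i ^ 2 = 1) :
    0 < min (1/5 : ℝ) (1 - 5 * ((d : ℝ) - 1) / 16) / d ∧
    A.trace * (∑ i, A.mulVec e i * e i) - (∑ i, (A.mulVec e i) ^ 2)
        + (∑ i, ∑ j, (A i j) ^ 2)
      ≥ (min (1/5 : ℝ) (1 - 5 * ((d : ℝ) - 1) / 16) / d) * A.trace ^ 2 := by
  have hsym : ∀ i j, A i j = A j i := fun i j => (Matrix.IsSymm.apply hA i j).symm
  have hmv : ∀ i, A.mulVec e i = ∑ j, A i j * e j := by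
    intro i; simp [Matrix.mulVec, dotProduct]
  have htr : A.trace = ∑ i, A i i := by simp [Matrix.trace, Matrix.diag]
  obtain ⟨h2, h3⟩ := stmt0_core d A hsym e he
  have h1 : (∑ i, (∑ j, A i j * e j) * e i) ^ 2 ≤ ∑ i, (∑ j, A i j * e j) ^ 2 := by
    have := Finset.sum_mul_sq_le_sq_mul_sq Finset.univ
      (fun i => ∑ j, A i j * e j) e
    rw [he, mul_one] at this
    exact this
  have hfin := stmt0_final d hd1 hd4 (∑ i, A i i) (∑ i, (∑ j, A i j * e j) * e i)
    (∑ i, (∑ j, A i j * e j) ^ 2) (∑ i, ∑ j, A i j ^ 2) h1 h2 h3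
  constructor
  · have hmin : (0:ℝ) < min (1/5 : ℝ) (1 - 5 * ((d : ℝ) - 1) / 16) := by
      have : (d : ℝ) ≤ 4 := by exact_mod_cast hd4
      rw [lt_min_iff]; constructor <;> [norm_num; linarith]
    have hd : (0:ℝ) < d := by positivity
    positivity
  · rw [ge_iff_le, htr]
    calc min (1/5 : ℝ) (1 - 5 * ((d : ℝ) - 1) / 16) / d * (∑ i, A i i) ^ 2
        ≤ (∑ i, A i i) * (∑ i, (∑ j, A i j * e j) * e i)
          - (∑ i, (∑ j, A i j * e j) ^ 2) + (∑ i, ∑ j, A i j ^ 2) := hfin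
      _ = (∑ i, A i i) * (∑ i, A.mulVec e i * e i) - (∑ i, (A.mulVec e i) ^ 2)
          + (∑ i, ∑ j, A i j ^ 2) := by simp only [hmv]
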